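/- Let Â = A + εA₀ and B̂ = B + εB₀ be dual matrices in 𝔻^{m×n}. If B̂ is regular (i.e. B̂·Ŷ·B̂ = B̂ for some Ŷ ∈ 𝔻^{n×m}) and 𝒩(Â) = 𝒩(B̂), then Â is regular and ℛ(Âᵀ) = ℛ(B̂ᵀ). -/

import Mathlib

open Matrix

/-- The dual matrix `A + ε A₀` over the dual numbers `𝔻 = ℝ[ε]`, `ε² = 0`. -/
def dualMat {m n : ℕ} (A A₀ : Matrix (Fin m) (Fin n) ℝ) :
    Matrix (Fin m) (Fin n) (DualNumber ℝ) :=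
  A.map (fun r => TrivSqZeroExt.inl r) + A₀.map (fun r => TrivSqZeroExt.inr r)

open TrivSqZeroExt in
lemma dm_apply {m n : ℕ} (A A₀ : Matrix (Fin m) (Fin n) ℝ) (i j) :
    dualMat A A₀ i j = (A i j, A₀ i j) := by
  simp [dualMat, Matrix.add_apply]
  ext <;> simp

open TrivSqZeroExt in
lemma dm_surj {m n : ℕ} (M : Matrix (Fin m) (Fin n) (DualNumber ℝ)) :
    M = dualMat (M.map fst) (M.map snd) := by
  ext i j
  · rw [dm_apply]; rfl
  · rw [dm_apply]; rfl

open TrivSqZeroExt in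
lemma dm_inj {m n : ℕ} {A A₀ C C₀ : Matrix (Fin m) (Fin n) ℝ}
    (h : dualMat A A₀ = dualMat C C₀) : A = C ∧ A₀ = C₀ := by
  constructor <;> ext i j
  · have := congrArg TrivSqZeroExt.fst (congrFun (congrFun h i) j)
    rwa [dm_apply, dm_apply, fst_mk, fst_mk] at this
  · have := congrArg TrivSqZeroExt.snd (congrFun (congrFun h i) j)
    rwa [dm_apply, dm_apply, snd_mk, snd_mk] at this

open TrivSqZeroExt in
lemma dm_mul {m n p : ℕ} (A A₀ : Matrix (Fin m) (Fin n) ℝ)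
    (C C₀ : Matrix (Fin n) (Fin p) ℝ) :
    dualMat A A₀ * dualMat C C₀ = dualMat (A * C) (A * C₀ + A₀ * C) := by
  ext i j
  · rw [dm_apply]
    simp only [Matrix.mul_apply, fst_sum, fst_mul, dm_apply, fst_mk, snd_mk]
    rfl
  · rw [dm_apply]
    simp only [Matrix.mul_apply, snd_sum, snd_mul, dm_apply, fst_mk, snd_mk, Matrix.add_apply]
    rw [← Finset.sum_add_distrib]
    refine Finset.sum_congr rfl fun k _ => ?_
    erw [snd_mul]
    simp [mul_comm]

open TrivSqZeroExt in
lemma dm_mulVec {m n : ℕ} (A A₀ : Matrix (Fin m) (Fin n) ℝ) (b b₀ : Fin n → ℝ) :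
    (dualMat A A₀).mulVec (fun i => (b i, b₀ i)) =
      fun i => (A.mulVec b i, A.mulVec b₀ i + A₀.mulVec b i) := by
  funext i
  ext
  · simp only [Matrix.mulVec, dotProduct, fst_sum, fst_mul, dm_apply, fst_mk, snd_mk]
    rfl
  · simp only [Matrix.mulVec, dotProduct, snd_sum, snd_mul, dm_apply, fst_mk, snd_mk]
    rw [← Finset.sum_add_distrib]
    refine Finset.sum_congr rfl fun k _ => ?_
    erw [snd_mul]
    simp [mul_comm]

lemma dm_mulVec_eq_zero {m n : ℕ} (A A₀ : Matrix (Fin m) (Fin n) ℝ) (b b₀ : Fin n → ℝ) :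
    (dualMat A A₀).mulVec (fun i => (b i, b₀ i)) = 0 ↔
      (A.mulVec b = 0 ∧ A.mulVec b₀ + A₀.mulVec b = 0) := by
  rw [dm_mulVec]
  simp [funext_iff, Prod.mk_eq_zero, forall_and]
  constructor
  · intro h
    exact ⟨fun x => congrArg TrivSqZeroExt.fst (congrFun h x),
      fun x => congrArg TrivSqZeroExt.snd (congrFun h x)⟩
  · rintro ⟨h1, h2⟩
    funext x
    exact TrivSqZeroExt.ext (h1 x) (h2 x)

lemma eq_of_mulVec {m n : ℕ} {R : Type*} [CommRing R] {M N : Matrix (Fin m) (Fin n) R}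
    (h : ∀ v, M.mulVec v = N.mulVec v) : M = N := by
  ext i j
  have := congrFun (h (Pi.single j 1)) i
  simpa [Matrix.mulVec_single] using this

lemma exists_ginv {m n : ℕ} (A : Matrix (Fin m) (Fin n) ℝ) :
    ∃ G : Matrix (Fin n) (Fin m) ℝ, A * G * A = A := by
  set f := A.mulVecLin with hf
  obtain ⟨g, hg⟩ := f.rangeRestrict.exists_rightInverse_of_surjective f.range_rangeRestrict
  obtain ⟨q, hq⟩ := Submodule.exists_isCompl (LinearMap.range f)
  set π := (LinearMap.range f).linearProjOfIsCompl q hq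
  set h : (Fin m → ℝ) →ₗ[ℝ] (Fin n → ℝ) := g ∘ₗ π
  refine ⟨LinearMap.toMatrix' h, ?_⟩
  have key : ∀ x, f (h (f x)) = f x := by
    intro x
    have h1 : π (f x) = ⟨f x, LinearMap.mem_range_self f x⟩ :=
      Submodule.linearProjOfIsCompl_apply_left hq ⟨f x, LinearMap.mem_range_self f x⟩
    have h2 : f.rangeRestrict (g ⟨f x, LinearMap.mem_range_self f x⟩) =
        ⟨f x, LinearMap.mem_range_self f x⟩ := by
      rw [← LinearMap.comp_apply, hg]; rfl
    have h3 := congrArg Subtype.val h2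
    simp only [LinearMap.rangeRestrict, LinearMap.codRestrict_apply] at h3
    simp [h, h1, h3]
  apply eq_of_mulVec
  intro v
  rw [← Matrix.mulVec_mulVec, ← Matrix.mulVec_mulVec,
    ← Matrix.toLin'_apply (LinearMap.toMatrix' h), Matrix.toLin'_toMatrix']
  have := key v
  simpa [Matrix.mulVecLin_apply, hf] using this

/-- if `B̂ = B + ε B₀` is regular and `𝒩(Â) = 𝒩(B̂)`, then
`Â = A + ε A₀` is regular and `ℛ(Âᵀ) = ℛ(B̂ᵀ)`. -/
theorem stmt17 {m n : ℕ} (A A₀ B B₀ : Matrix (Fin m) (Fin n) ℝ)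
    (hBreg : ∃ Y : Matrix (Fin n) (Fin m) (DualNumber ℝ),
      dualMat B B₀ * Y * dualMat B B₀ = dualMat B B₀)
    (hnull : {β : Fin n → DualNumber ℝ | (dualMat A A₀).mulVec β = 0} =
      {β : Fin n → DualNumber ℝ | (dualMat B B₀).mulVec β = 0}) :
    (∃ X : Matrix (Fin n) (Fin m) (DualNumber ℝ),
      dualMat A A₀ * X * dualMat A A₀ = dualMat A A₀) ∧
    {v : Fin n → DualNumber ℝ | ∃ γ, v = (dualMat A A₀)ᵀ.mulVec γ} =
      {v : Fin n → DualNumber ℝ | ∃ γ, v = (dualMat B B₀)ᵀ.mulVec γ} := by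
  obtain ⟨Yhat, hY⟩ := hBreg
  set Y := Yhat.map TrivSqZeroExt.fst with hYdef
  set Y₀ := Yhat.map TrivSqZeroExt.snd with hY₀def
  have hYd : Yhat = dualMat Y Y₀ := dm_surj Yhat
  -- real parts of the regularity of B̂
  have hmul : dualMat (B * Y * B) (B * Y * B₀ + (B * Y₀ + B₀ * Y) * B) = dualMat B B₀ := by
    rw [hYd] at hY
    rw [← hY, dm_mul, dm_mul]
  obtain ⟨hB1, hB2⟩ := dm_inj hmul
  -- the null-space hypothesis in real terms
  have hnr : ∀ b b₀ : Fin n → ℝ,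
      (A.mulVec b = 0 ∧ A.mulVec b₀ + A₀.mulVec b = 0) ↔
      (B.mulVec b = 0 ∧ B.mulVec b₀ + B₀.mulVec b = 0) := by
    intro b b₀
    have h := Set.ext_iff.mp hnull (fun i => (b i, b₀ i))
    replace h := (dm_mulVec_eq_zero A A₀ b b₀).symm.trans (h.trans (dm_mulVec_eq_zero B B₀ b b₀))
    exact h
  -- real null spaces agree
  have step1 : ∀ b : Fin n → ℝ, A.mulVec b = 0 ↔ B.mulVec b = 0 := by
    intro b
    have := hnr 0 b
    simpa using this
  -- key condition: A₀ maps 𝒩(A) into ℛ(A)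
  have key : ∀ b : Fin n → ℝ, A.mulVec b = 0 → ∃ c, A₀.mulVec b = A.mulVec c := by
    intro b hb
    have hBb : B.mulVec b = 0 := (step1 b).mp hb
    have h2 := congrArg (fun M => M.mulVec b) hB2
    simp only [Matrix.add_mulVec, ← Matrix.mulVec_mulVec, hBb, Matrix.mulVec_zero,
      add_zero, zero_add] at h2
    -- h2 : B.mulVec (Y.mulVec (B₀.mulVec b)) = B₀.mulVec b
    have hBb₀ : B.mulVec (-(Y.mulVec (B₀.mulVec b))) + B₀.mulVec b = 0 := by
      rw [Matrix.mulVec_neg, h2, neg_add_cancel]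
    obtain ⟨hA1, hA2⟩ := (hnr b (-(Y.mulVec (B₀.mulVec b)))).mpr ⟨hBb, hBb₀⟩
    refine ⟨-(-(Y.mulVec (B₀.mulVec b))), ?_⟩
    rw [Matrix.mulVec_neg]
    exact eq_neg_of_add_eq_zero_right hA2
  obtain ⟨G, hG⟩ := exists_ginv A
  -- the real compatibility condition
  have claim : (1 - A * G) * (A₀ * (1 - G * A)) = 0 := by
    apply eq_of_mulVec
    intro v
    rw [← Matrix.mulVec_mulVec, ← Matrix.mulVec_mulVec]
    have hAw : A.mulVec ((1 - G * A).mulVec v) = 0 := by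
      rw [Matrix.mulVec_mulVec]
      have : A * (1 - G * A) = 0 := by
        rw [Matrix.mul_sub, Matrix.mul_one, ← Matrix.mul_assoc, hG, sub_self]
      rw [this, Matrix.zero_mulVec]
    obtain ⟨c, hc⟩ := key _ hAw
    rw [hc, Matrix.mulVec_mulVec]
    have : (1 - A * G) * A = 0 := by
      rw [Matrix.sub_mul, Matrix.one_mul, hG, sub_self]
    rw [this, Matrix.zero_mulVec, Matrix.zero_mulVec]
  -- Â is regular with g-inverse X̂ = G − ε G A₀ G
  have hX : dualMat A A₀ * dualMat G (-(G * A₀ * G)) * dualMat A A₀ = dualMat A A₀ := by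
    rw [dm_mul, dm_mul]
    have h2 : A * G * A₀ + (A * -(G * A₀ * G) + A₀ * G) * A = A₀ := by
      have hd : A * G * A₀ + (A * -(G * A₀ * G) + A₀ * G) * A - A₀ =
          -((1 - A * G) * (A₀ * (1 - G * A))) := by
        simp only [Matrix.mul_sub, Matrix.sub_mul, Matrix.mul_one, Matrix.one_mul,
          Matrix.add_mul, Matrix.mul_neg, Matrix.neg_mul, neg_sub, Matrix.mul_assoc]
        abel
      rw [claim, neg_zero] at hd
      exact sub_eq_zero.mp hd
    rw [hG, h2]
  refine ⟨⟨dualMat G (-(G * A₀ * G)), hX⟩, ?_⟩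
  -- Â = Â Ŷ B̂
  have hABY : dualMat A A₀ * Yhat * dualMat B B₀ = dualMat A A₀ := by
    apply eq_of_mulVec
    intro v
    have hw : (dualMat B B₀).mulVec (v - (Yhat * dualMat B B₀).mulVec v) = 0 := by
      rw [Matrix.mulVec_sub, Matrix.mulVec_mulVec, ← Matrix.mul_assoc, hY, sub_self]
    have hmem : (v - (Yhat * dualMat B B₀).mulVec v) ∈
        {β : Fin n → DualNumber ℝ | (dualMat B B₀).mulVec β = 0} := hw
    rw [← hnull] at hmem
    have : (dualMat A A₀).mulVec (v - (Yhat * dualMat B B₀).mulVec v) = 0 := hmem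
    rw [Matrix.mulVec_sub, Matrix.mulVec_mulVec, sub_eq_zero, ← Matrix.mul_assoc] at this
    rw [← this]
  -- B̂ = B̂ X̂ Â
  have hBXA : dualMat B B₀ * dualMat G (-(G * A₀ * G)) * dualMat A A₀ = dualMat B B₀ := by
    apply eq_of_mulVec
    intro v
    have hw : (dualMat A A₀).mulVec
        (v - (dualMat G (-(G * A₀ * G)) * dualMat A A₀).mulVec v) = 0 := by
      rw [Matrix.mulVec_sub, Matrix.mulVec_mulVec, ← Matrix.mul_assoc, hX, sub_self]
    have hmem : (v - (dualMat G (-(G * A₀ * G)) * dualMat A A₀).mulVec v) ∈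
        {β : Fin n → DualNumber ℝ | (dualMat A A₀).mulVec β = 0} := hw
    rw [hnull] at hmem
    have : (dualMat B B₀).mulVec
        (v - (dualMat G (-(G * A₀ * G)) * dualMat A A₀).mulVec v) = 0 := hmem
    rw [Matrix.mulVec_sub, Matrix.mulVec_mulVec, sub_eq_zero, ← Matrix.mul_assoc] at this
    rw [← this]
  ext v
  simp only [Set.mem_setOf_eq]
  constructor
  · rintro ⟨γ, rfl⟩
    refine ⟨((dualMat A A₀ * Yhat)ᵀ).mulVec γ, ?_⟩
    rw [Matrix.mulVec_mulVec, ← Matrix.transpose_mul, hABY]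
  · rintro ⟨γ, rfl⟩
    refine ⟨((dualMat B B₀ * dualMat G (-(G * A₀ * G)))ᵀ).mulVec γ, ?_⟩
    rw [Matrix.mulVec_mulVec, ← Matrix.transpose_mul, hBXA]
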